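/- Assume the Continuum Hypothesis (2^{ℵ₀} = ℵ₁). Let B be a countable Boolean algebra and let (φ_α)_{α<ω₂} be Boolean homomorphisms from B into M_{ω₂}. Then there exist distinct α, β < ω₂ which are symmetric: for all a, b ∈ B, φ_α(a) ⊓ φ_β(b) = ⊥ holds if and only if φ_β(a) ⊓ φ_α(b) = ⊥ holds. -/

import Mathlib

open MeasureTheory Set Filter Topology
open scoped symmDiff ENNReal

noncomputable section

universe u v

/-- The two-element set `{0,1}`, as an additive group (addition mod 2) with the
discrete topology. -/
inductive Two : Type
  | zero
  | one
  deriving DecidableEq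

instance : Fintype Two := ⟨{Two.zero, Two.one}, fun x => by cases x <;> simp⟩

instance : Zero Two := ⟨Two.zero⟩
instance : One Two := ⟨Two.one⟩

/-- Addition modulo 2 on `{0,1}`. -/
def Two.add : Two → Two → Two
  | Two.zero, x => x
  | Two.one, Two.zero => Two.one
  | Two.one, Two.one => Two.zero

instance : Add Two := ⟨Two.add⟩
instance : Neg Two := ⟨fun x => x⟩

instance : AddCommGroup Two where
  add := (· + ·)
  zero := Two.zero
  neg := (- ·)
  add_assoc := by decide
  zero_add := by decide
  add_zero := by decide
  neg_add_cancel := by decide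
  add_comm := by decide
  nsmul := nsmulRec
  zsmul := zsmulRec

instance : TopologicalSpace Two := ⊥
instance : DiscreteTopology Two := ⟨rfl⟩

instance : IsTopologicalAddGroup Two where
  continuous_add := continuous_of_discreteTopology
  continuous_neg := continuous_of_discreteTopology

/-- The Cantor cube `{0,1}^κ`, with the product topology. -/
abbrev Cube (κ : Type u) : Type u := κ → Two

instance (κ : Type u) : MeasurableSpace (Cube κ) := borel _

instance (κ : Type u) : BorelSpace (Cube κ) := ⟨rfl⟩

/-- The fair-coin product measure `λ_κ` on `{0,1}^κ`: the Haar measure of the compact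
group `{0,1}^κ`, normalized so that the whole space has measure `1`. -/
def lam (κ : Type u) : Measure (Cube κ) :=
  Measure.addHaarMeasure ⟨⟨Set.univ, isCompact_univ⟩, by simpa using Set.univ_nonempty⟩

/-- The Boolean algebra of measurable subsets of `X`. -/
abbrev MSet (X : Type u) [MeasurableSpace X] : Type u := {s : Set X // MeasurableSet s}

/-- The ideal of `μ`-null sets in the Boolean ring of measurable subsets of `X`. -/
def nullIdeal {X : Type u} [MeasurableSpace X] (μ : Measure X) :
    Ideal (AsBoolRing (MSet X)) where
  carrier := {s | μ (ofBoolRing s : MSet X).1 = 0}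
  zero_mem' := by
    show μ (ofBoolRing (0 : AsBoolRing (MSet X)) : MSet X).1 = 0
    rw [ofBoolRing_zero]
    simpa using measure_empty (μ := μ)
  add_mem' := by
    intro a b ha hb
    show μ (ofBoolRing (a + b) : MSet X).1 = 0
    rw [ofBoolRing_add]
    refine le_antisymm ?_ (zero_le)
    calc μ ((ofBoolRing a ∆ ofBoolRing b : MSet X) : Set X)
        ≤ μ (((ofBoolRing a : MSet X) : Set X) ∪ ((ofBoolRing b : MSet X) : Set X)) := by
          refine measure_mono ?_
          simp only [symmDiff_def, MeasurableSet.sup_eq_union, MeasurableSet.coe_union,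
            MeasurableSet.coe_sdiff]
          exact Set.union_subset_union Set.diff_subset Set.diff_subset
      _ ≤ μ ((ofBoolRing a : MSet X) : Set X) + μ ((ofBoolRing b : MSet X) : Set X) :=
          measure_union_le _ _
      _ = 0 := by rw [ha, hb, add_zero]
  smul_mem' := by
    intro c x hx
    show μ (ofBoolRing (c * x) : MSet X).1 = 0
    rw [ofBoolRing_mul]
    refine le_antisymm ?_ (zero_le)
    calc μ ((ofBoolRing c ⊓ ofBoolRing x : MSet X) : Set X)
        ≤ μ ((ofBoolRing x : MSet X) : Set X) := by
          refine measure_mono ?_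
          simp only [MeasurableSet.inf_eq_inter, MeasurableSet.coe_inter]
          exact Set.inter_subset_right
      _ = 0 := hx

instance {X : Type u} [MeasurableSpace X] (μ : Measure X) :
    BooleanRing (AsBoolRing (MSet X) ⧸ nullIdeal μ) where
  isIdempotentElem a := by
    show a * a = a
    obtain ⟨x, rfl⟩ := Ideal.Quotient.mk_surjective a
    rw [← map_mul]
    exact congrArg _ (BooleanRing.mul_self x)

/-- The measure algebra of the measure `μ`: measurable sets modulo `μ`-null sets,
as a Boolean algebra.  For `μ = lam κ` this is the measure algebra `M_κ`. -/
abbrev MAlg (X : Type u) [MeasurableSpace X] (μ : Measure X) : Type u :=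
  AsBoolAlg (AsBoolRing (MSet X) ⧸ nullIdeal μ)

/-- The class of a measurable set in the measure algebra. -/
def MAlg.mk {X : Type u} [MeasurableSpace X] (μ : Measure X) (s : MSet X) : MAlg X μ :=
  toBoolAlg (Ideal.Quotient.mk (nullIdeal μ) (toBoolRing s))

/-- The measure induced by `μ` on its measure algebra `MAlg X μ` (with real values). -/
def mval {X : Type u} [MeasurableSpace X] (μ : Measure X) (a : MAlg X μ) : ℝ :=
  Quotient.liftOn' (ofBoolAlg a) (fun s => (μ (ofBoolRing s : MSet X).1).toReal)
    (by
      intro s t h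
      have hst : s - t ∈ nullIdeal μ := by
        rwa [Submodule.quotientRel_def] at h
      have h0 : μ (((ofBoolRing s : MSet X) : Set X) ∆ ((ofBoolRing t : MSet X) : Set X)) = 0 := by
        have hn : μ ((ofBoolRing (s - t) : MSet X) : Set X) = 0 := hst
        rw [ofBoolRing_sub] at hn
        simpa only [symmDiff_def, MeasurableSet.sup_eq_union, MeasurableSet.coe_union,
          MeasurableSet.coe_sdiff, Set.sup_eq_union] using hn
      have hc := measure_congr (μ := μ) (MeasureTheory.measure_symmDiff_eq_zero_iff.mp h0)
      simp only [hc])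

/-- `ω₂`, the second uncountable cardinal's initial ordinal, as a linearly ordered type
(the type of ordinals `α < ω₂`). -/
abbrev Omega2 : Type := (Cardinal.aleph 2).ord.ToType


open Cardinal Ordinal Set
open scoped Classical

noncomputable section ErdosRado

variable {X : Type} (c : X → X → ℕ)

/-- helper: equal predicates give equal choices -/
private theorem choose_congr {α : Type*} {p q : α → Prop} (hp : ∃ y, p y) (hq : ∃ y, q y)
    (h : p = q) : hp.choose = hq.choose := by subst h; rfl

/-- The ramification branch attached to `a`. -/
def branch (a : X) : Ordinal.{0} → X :=
  WellFounded.fix wellFounded_lt (fun ξ ih =>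
    if h : ∃ y : X, ∀ η, ∀ hη : η < ξ, ih η hη ≠ y ∧ c (ih η hη) y = c (ih η hη) a
    then h.choose else a)

theorem branch_def (a : X) (ξ : Ordinal.{0}) :
    branch c a ξ = if h : ∃ y : X, ∀ η, ∀ _ : η < ξ,
        branch c a η ≠ y ∧ c (branch c a η) y = c (branch c a η) a
      then h.choose else a := by
  rw [branch, WellFounded.fix_eq]

theorem branch_nonempty (a : X) (ξ : Ordinal.{0}) (h : ∀ η, η < ξ → branch c a η ≠ a) :
    ∃ y : X, ∀ η, ∀ _ : η < ξ,
      branch c a η ≠ y ∧ c (branch c a η) y = c (branch c a η) a :=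
  ⟨a, fun η hη => ⟨h η hη, rfl⟩⟩

theorem branch_spec (a : X) (ξ : Ordinal.{0}) (h : ∀ η, η < ξ → branch c a η ≠ a) :
    ∀ η, η < ξ →
      branch c a η ≠ branch c a ξ ∧ c (branch c a η) (branch c a ξ) = c (branch c a η) a := by
  have hne := branch_nonempty c a ξ h
  have hb : branch c a ξ = hne.choose := by rw [branch_def]; exact dif_pos hne
  intro η hη
  rw [hb]
  exact hne.choose_spec η hη

theorem branch_hit (a : X) : ∃ ξ : Ordinal.{0}, branch c a ξ = a := by
  by_contra hcon
  push_neg at hcon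
  have hinj : ∀ η ξ : Ordinal.{0}, η < ξ → branch c a η ≠ branch c a ξ := fun η ξ hηξ =>
    (branch_spec c a ξ (fun η' _ => hcon η') η hηξ).1
  let o : Ordinal.{0} := (Order.succ (Cardinal.mk X)).ord
  have hI : Function.Injective (fun w : o.ToType =>
      branch c a (((@Ordinal.ToType.mk o)).symm w).1) := by
    intro u v huv
    by_contra hne
    rcases lt_trichotomy (((@Ordinal.ToType.mk o)).symm u).1 (((@Ordinal.ToType.mk o)).symm v).1
      with h | h | h
    · exact hinj _ _ h huv
    · exact hne (((@Ordinal.ToType.mk o)).symm.injective (Subtype.ext h) ▸ rfl)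
    · exact hinj _ _ h huv.symm
  have hcard := Cardinal.mk_le_of_injective hI
  rw [Cardinal.mk_toType] at hcard
  rw [show o = (Order.succ (Cardinal.mk X)).ord from rfl, Cardinal.card_ord] at hcard
  exact (Order.lt_succ (Cardinal.mk X)).not_ge hcard

/-- the hitting time -/
def hitTime (a : X) : Ordinal.{0} := sInf ({ξ : Ordinal.{0} | branch c a ξ = a} : Set Ordinal.{0})

theorem hitTime_spec (a : X) : branch c a (hitTime c a) = a := by
  have h : ({ξ : Ordinal.{0} | branch c a ξ = a} : Set Ordinal.{0}).Nonempty := branch_hit c a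
  exact csInf_mem h

theorem hitTime_min (a : X) {η : Ordinal.{0}} (hη : η < hitTime c a) : branch c a η ≠ a := by
  intro h
  have hle : hitTime c a ≤ η :=
    csInf_le' (s := {ξ : Ordinal.{0} | branch c a ξ = a}) (a := η) h
  exact hle.not_gt hη

theorem branch_det {a b : X} (ξ₀ : Ordinal.{0})
    (hna : ∀ η, η < ξ₀ → branch c a η ≠ a) (hnb : ∀ η, η < ξ₀ → branch c b η ≠ b)
    (hcol : ∀ η, η < ξ₀ → c (branch c a η) a = c (branch c b η) b) :
    ∀ ξ, ξ ≤ ξ₀ → branch c a ξ = branch c b ξ := by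
  intro ξ
  induction ξ using Ordinal.induction with
  | h ξ IH =>
    intro hξ
    have hea := branch_nonempty c a ξ (fun η hη => hna η (lt_of_lt_of_le hη hξ))
    have heb := branch_nonempty c b ξ (fun η hη => hnb η (lt_of_lt_of_le hη hξ))
    have hba : branch c a ξ = hea.choose := by rw [branch_def]; exact dif_pos hea
    have hbb : branch c b ξ = heb.choose := by rw [branch_def]; exact dif_pos heb
    rw [hba, hbb]
    apply choose_congr
    funext y
    have key : ∀ η, η < ξ → branch c a η = branch c b η := fun η hη =>
      IH η hη (le_of_lt (lt_of_lt_of_le hη hξ))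
    apply propext
    constructor
    · intro hy η hη
      obtain ⟨h1, h2⟩ := hy η hη
      have hc := hcol η (lt_of_lt_of_le hη hξ)
      rw [← key η hη] at hc ⊢
      exact ⟨h1, h2.trans hc⟩
    · intro hy η hη
      obtain ⟨h1, h2⟩ := hy η hη
      have hc := hcol η (lt_of_lt_of_le hη hξ)
      rw [key η hη] at hc ⊢
      exact ⟨h1, h2.trans hc.symm⟩





private theorem prevFinite {W : Type} (g : ∀ m : ℕ, W) (n : ℕ) :
    {w : W | ∃ m, ∃ _ : m < n, g m = w}.Finite :=
  Set.Finite.subset (Set.finite_range (fun m : Fin n => g m.1))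
    (by rintro w ⟨m, hm, rfl⟩; exact ⟨⟨m, hm⟩, rfl⟩)

def seqInto {W : Type} [LinearOrder W] [WellFoundedLT W] (S : Set W) (hS : S.Infinite) : ℕ → W :=
  WellFounded.fix (wellFounded_lt (α := ℕ)) fun n ih =>
    WellFounded.min (wellFounded_lt (α := W))
      (S \ {w | ∃ m, ∃ hm : m < n, ih m hm = w})
      ((hS.diff (Set.Finite.subset (Set.finite_range (fun m : Fin n => ih m.1 m.2))
        (by rintro w ⟨m, hm, rfl⟩; exact ⟨⟨m, hm⟩, rfl⟩))).nonempty)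

theorem seqInto_def {W : Type} [LinearOrder W] [WellFoundedLT W] (S : Set W) (hS : S.Infinite) (n : ℕ) :
    seqInto S hS n = WellFounded.min (wellFounded_lt (α := W))
      (S \ {w | ∃ m, ∃ _ : m < n, seqInto S hS m = w})
      ((hS.diff (prevFinite (seqInto S hS) n)).nonempty) := by
  rw [seqInto, WellFounded.fix_eq]

theorem seqInto_mem {W : Type} [LinearOrder W] [WellFoundedLT W] (S : Set W) (hS : S.Infinite) (n : ℕ) :
    seqInto S hS n ∈ S ∧ seqInto S hS n ∉ {w : W | ∃ m, ∃ _ : m < n, seqInto S hS m = w} := by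
  rw [seqInto_def]
  have := WellFounded.min_mem (wellFounded_lt (α := W))
    (S \ {w | ∃ m, ∃ _ : m < n, seqInto S hS m = w})
    ((hS.diff (prevFinite (seqInto S hS) n)).nonempty)
  exact this

theorem seqInto_strictMono {W : Type} [LinearOrder W] [WellFoundedLT W] (S : Set W) (hS : S.Infinite) : StrictMono (seqInto S hS) := by
  intro m n hmn
  have h1 : seqInto S hS n ∈ S \ {w : W | ∃ k, ∃ _ : k < m, seqInto S hS k = w} := by
    have h2 := seqInto_mem S hS n
    exact ⟨h2.1, fun ⟨k, hk, he⟩ => h2.2 ⟨k, hk.trans hmn, he⟩⟩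
  have h3 : ¬ seqInto S hS n < seqInto S hS m := by
    rw [seqInto_def S hS m]
    exact WellFounded.not_lt_min _ _ h1
  have h4 : seqInto S hS n ≠ seqInto S hS m := by
    intro he
    exact (seqInto_mem S hS n).2 ⟨m, hmn, he.symm⟩
  rcases lt_trichotomy (seqInto S hS m) (seqInto S hS n) with h|h|h
  · exact h
  · exact absurd h.symm h4
  · exact absurd h h3

theorem iio_countable (w : (Cardinal.aleph 1).ord.ToType) : (Set.Iio w).Countable := by
  have h2 := Ordinal.typein_lt_self w
  rw [Cardinal.lt_ord] at h2
  have h1 := @Ordinal.card_typein ((Cardinal.aleph 1).ord.ToType) (fun a b => a < b)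
    isWellOrder_lt w
  rw [Cardinal.countable_iff_lt_aleph_one]
  exact h1 ▸ h2

theorem erdos_rado_countable {X : Type} (hX : Cardinal.continuum < Cardinal.mk X)
    (c : X → X → ℕ) :
    ∃ f : ℕ → X, (∀ i j, i < j → f i ≠ f j) ∧ ∃ r, ∀ i j, i < j → c (f i) (f j) = r := by
  have hiso := @Ordinal.ToType.mk (Cardinal.aleph 1).ord
  set o₁ : Ordinal.{0} := (Cardinal.aleph 1).ord with ho₁
  let iso := @Ordinal.ToType.mk o₁
  let ordOf : o₁.ToType → Ordinal.{0} := fun w => (iso.symm w).1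
  have hordlt : ∀ w, ordOf w < o₁ := fun w => (iso.symm w).2
  by_cases hcase : ∃ a : X, o₁ ≤ hitTime c a
  · obtain ⟨a, ha⟩ := hcase
    have hnohit : ∀ η, η < o₁ → branch c a η ≠ a := fun η hη =>
      hitTime_min c a (lt_of_lt_of_le hη ha)
    let d : o₁.ToType → ℕ := fun w => c (branch c a (ordOf w)) a
    have hfiber : ∃ r, {w | d w = r}.Infinite := by
      by_contra h
      push_neg at h
      have hsub : (Set.univ : Set o₁.ToType) ⊆ ⋃ r : ℕ, {w | d w = r} := fun w _ =>
        Set.mem_iUnion.mpr ⟨d w, rfl⟩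
      have hcnt : (Set.univ : Set o₁.ToType).Countable :=
        Set.Countable.mono hsub
          (Set.countable_iUnion fun r => ((h r).countable))
      have hc : Countable o₁.ToType := Set.countable_univ_iff.mp hcnt
      have hle : Cardinal.mk o₁.ToType ≤ Cardinal.aleph0 := Cardinal.mk_le_aleph0
      rw [Cardinal.mk_toType, Cardinal.card_ord] at hle
      exact (Cardinal.aleph0_lt_aleph_one).not_ge hle
    obtain ⟨r, hr⟩ := hfiber
    let g := seqInto _ hr
    have hmono : ∀ i j : ℕ, i < j → ordOf (g i) < ordOf (g j) := by
      intro i j hij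
      have h5 := seqInto_strictMono _ hr hij
      exact Subtype.coe_lt_coe.mpr (iso.symm.lt_iff_lt.mpr h5)
    refine ⟨fun i => branch c a (ordOf (g i)), ?_, r, ?_⟩
    · intro i j hij
      exact (branch_spec c a (ordOf (g j))
        (fun η hη => hnohit η (hη.trans (hordlt _))) _ (hmono i j hij)).1
    · intro i j hij
      have h2 := (branch_spec c a (ordOf (g j))
        (fun η hη => hnohit η (hη.trans (hordlt _))) _ (hmono i j hij)).2
      rw [h2]
      exact (seqInto_mem _ hr i).1
  · exfalso
    push_neg at hcase
    have hcnt : ∀ w : o₁.ToType, ∃ h : Set.Iio w → ℕ, Function.Injective h := by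
      intro w
      have hwc := iio_countable w
      haveI := hwc.to_subtype
      obtain ⟨f, hf⟩ := exists_injective_nat (Set.Iio w)
      exact ⟨f, hf⟩
    choose num hnum using hcnt
    let wOf : X → o₁.ToType := fun a => iso ⟨hitTime c a, hcase a⟩
    let Φ : X → o₁.ToType × (ℕ → Option ℕ) := fun a =>
      (wOf a, fun n => if h : ∃ η : Set.Iio (wOf a), num (wOf a) η = n
        then some (c (branch c a (ordOf h.choose.1)) a) else none)
    have hΦ : Function.Injective Φ := by
      intro a b hab
      have hw : wOf a = wOf b := congrArg Prod.fst hab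
      have hht : hitTime c a = hitTime c b := by
        have := iso.injective hw
        exact congrArg Subtype.val this
      have hΦ2 := congrArg Prod.snd hab
      simp only [Φ] at hΦ2
      rw [← hw] at hΦ2
      have hcol : ∀ η, η < hitTime c a → c (branch c a η) a = c (branch c b η) b := by
        intro η hη
        have hη₁ : η < o₁ := hη.trans (hcase a)
        have helt : (iso ⟨η, hη₁⟩ : o₁.ToType) < wOf a := by
          apply iso.lt_iff_lt.mpr
          exact Subtype.mk_lt_mk.mpr hη
        set elt : Set.Iio (wOf a) := ⟨iso ⟨η, hη₁⟩, helt⟩ with helt'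
        have hC : ∃ η' : Set.Iio (wOf a), num (wOf a) η' = num (wOf a) elt := ⟨elt, rfl⟩
        have hev := congrFun hΦ2 (num (wOf a) elt)
        rw [dif_pos hC, dif_pos hC] at hev
        have hch : hC.choose = elt := hnum (wOf a) hC.choose_spec
        rw [hch] at hev
        have hord : ordOf elt.1 = η := by
          simp only [ordOf, elt]
          rw [OrderIso.symm_apply_apply]
        rw [hord] at hev
        exact Option.some.injEq _ _ ▸ hev
      have hdet := branch_det c (hitTime c a)
        (fun η hη => hitTime_min c a hη)
        (fun η hη => hitTime_min c b (hht ▸ hη))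
        hcol (hitTime c a) le_rfl
      rw [hitTime_spec c a, hht, hitTime_spec c b] at hdet
      exact hdet
    have hcard := Cardinal.mk_le_of_injective hΦ
    rw [Cardinal.mk_prod, Cardinal.lift_id, Cardinal.lift_id] at hcard
    have h1 : Cardinal.mk o₁.ToType = Cardinal.aleph 1 := by
      rw [Cardinal.mk_toType, Cardinal.card_ord]
    have h2 : Cardinal.mk (ℕ → Option ℕ) = Cardinal.continuum := by
      rw [← Cardinal.power_def, Cardinal.mk_eq_aleph0 (Option ℕ), Cardinal.mk_eq_aleph0 ℕ,
        Cardinal.aleph0_power_aleph0]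
    rw [h1, h2] at hcard
    have h3 : Cardinal.aleph 1 * Cardinal.continuum = Cardinal.continuum := by
      rw [Cardinal.mul_eq_max (Cardinal.aleph0_le_aleph 1) Cardinal.aleph0_le_continuum]
      exact max_eq_right Cardinal.aleph_one_le_continuum
    rw [h3] at hcard
    exact hX.not_ge hcard

end ErdosRado

section MAlgLemmas

open scoped Classical

variable {X : Type u} [MeasurableSpace X] (μ : Measure X)

theorem MAlg.mk_surjective : Function.Surjective (MAlg.mk μ) := by
  intro a
  obtain ⟨r, hr⟩ := Ideal.Quotient.mk_surjective (I := nullIdeal μ) (ofBoolAlg a)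
  refine ⟨ofBoolRing r, ?_⟩
  have : toBoolRing (ofBoolRing r : MSet X) = r := rfl
  rw [MAlg.mk, this, hr]
  rfl

theorem MAlg.mval_mk (s : MSet X) : mval μ (MAlg.mk μ s) = (μ s.1).toReal := rfl

theorem MAlg.mk_inf (s t : MSet X) : MAlg.mk μ (s ⊓ t) = MAlg.mk μ s ⊓ MAlg.mk μ t := by
  rw [MAlg.mk, MAlg.mk, MAlg.mk, toBoolRing_inf, map_mul, toBoolAlg_mul]

theorem MAlg.mk_sup (s t : MSet X) : MAlg.mk μ (s ⊔ t) = MAlg.mk μ s ⊔ MAlg.mk μ t := by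
  have h1 : s ⊔ t = (s ∆ t) ∆ (s ⊓ t) := (symmDiff_symmDiff_inf s t).symm
  have h2 : (Ideal.Quotient.mk (nullIdeal μ)) (toBoolRing (s ⊔ t)) =
      (Ideal.Quotient.mk (nullIdeal μ)) (toBoolRing s) +
        (Ideal.Quotient.mk (nullIdeal μ)) (toBoolRing t) +
        (Ideal.Quotient.mk (nullIdeal μ)) (toBoolRing s) *
          (Ideal.Quotient.mk (nullIdeal μ)) (toBoolRing t) := by
    rw [h1, toBoolRing_symmDiff, toBoolRing_symmDiff, toBoolRing_inf, RingHom.map_add, RingHom.map_add, RingHom.map_mul]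
  rw [MAlg.mk, MAlg.mk, MAlg.mk, h2, toBoolAlg_add_add_mul]

theorem MAlg.mk_eq_bot (s : MSet X) : MAlg.mk μ s = ⊥ ↔ μ s.1 = 0 := by
  rw [MAlg.mk, ← toBoolAlg_zero, toBoolAlg.injective.eq_iff, Ideal.Quotient.eq_zero_iff_mem]
  exact Iff.rfl

theorem mval_nonneg (a : MAlg X μ) : 0 ≤ mval μ a := by
  obtain ⟨s, rfl⟩ := MAlg.mk_surjective μ a
  rw [MAlg.mval_mk]
  exact ENNReal.toReal_nonneg

variable [IsFiniteMeasure μ]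

theorem mval_pos {a : MAlg X μ} (ha : a ≠ ⊥) : 0 < mval μ a := by
  obtain ⟨s, rfl⟩ := MAlg.mk_surjective μ a
  rw [MAlg.mval_mk]
  refine ENNReal.toReal_pos ?_ (measure_ne_top μ _)
  intro h0
  exact ha ((MAlg.mk_eq_bot μ s).mpr h0)

theorem mval_add {a b : MAlg X μ} (hab : a ⊓ b = ⊥) :
    mval μ (a ⊔ b) = mval μ a + mval μ b := by
  obtain ⟨s, rfl⟩ := MAlg.mk_surjective μ a
  obtain ⟨t, rfl⟩ := MAlg.mk_surjective μ b
  rw [← MAlg.mk_inf, MAlg.mk_eq_bot] at hab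
  rw [← MAlg.mk_sup, MAlg.mval_mk, MAlg.mval_mk, MAlg.mval_mk]
  have hst : (s ⊔ t).1 = s.1 ∪ t.1 := rfl
  have hit : (s ⊓ t).1 = s.1 ∩ t.1 := rfl
  rw [hit] at hab
  have hu : μ (s.1 ∪ t.1) = μ s.1 + μ t.1 := by
    have := measure_union_add_inter (μ := μ) s.1 t.2
    rw [hab, add_zero] at this
    exact this
  rw [hst, hu, ENNReal.toReal_add (measure_ne_top μ _) (measure_ne_top μ _)]

theorem mval_mono {a b : MAlg X μ} (hab : a ≤ b) : mval μ a ≤ mval μ b := by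
  have h1 : a ⊔ b \ a = b := sup_sdiff_cancel' le_rfl hab
  have h2 : a ⊓ b \ a = ⊥ := by
    simpa using disjoint_sdiff_self_right.eq_bot
  calc mval μ a ≤ mval μ a + mval μ (b \ a) := le_add_of_nonneg_right (mval_nonneg μ _)
    _ = mval μ (a ⊔ b \ a) := (mval_add μ h2).symm
    _ = mval μ b := by rw [h1]

end MAlgLemmas


instance (κ : Type u) : CompactSpace (Cube κ) := by infer_instance

instance lam.isFiniteMeasure (κ : Type u) : IsFiniteMeasure (lam κ) := by
  rw [lam]
  infer_instance

section Assembly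

open scoped Classical

theorem mval_disjoint_bound {X : Type u} [MeasurableSpace X] (μ : Measure X) [IsFiniteMeasure μ]
    (t : ℕ → MAlg X μ) (δ : ℝ) (hm : ∀ i, δ ≤ mval μ (t i))
    (hd : ∀ i j, i < j → t i ⊓ t j = ⊥) (k : ℕ) :
    (k : ℝ) * δ ≤ mval μ (⊤ : MAlg X μ) := by
  let S : ℕ → MAlg X μ := fun k => Nat.rec ⊥ (fun n s => s ⊔ t n) k
  have hS : ∀ k j, k ≤ j → S k ⊓ t j = ⊥ := by
    intro k
    induction k with
    | zero => intro j _; exact bot_inf_eq _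
    | succ n IH =>
      intro j hj
      have h1 : S (n+1) = S n ⊔ t n := rfl
      rw [h1, inf_sup_right, IH j (Nat.le_of_succ_le hj), hd n j hj, sup_bot_eq]
  have hSm : ∀ k : ℕ, (k : ℝ) * δ ≤ mval μ (S k) := by
    intro k
    induction k with
    | zero =>
      have : mval μ (S 0) = mval μ (⊥ : MAlg X μ) := rfl
      simp only [Nat.cast_zero, zero_mul]
      exact mval_nonneg μ _
    | succ n IH =>
      have h1 : S (n+1) = S n ⊔ t n := rfl
      rw [h1, mval_add μ (hS n n le_rfl)]
      push_cast
      nlinarith [hm n, IH]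
  calc (k : ℝ) * δ ≤ mval μ (S k) := hSm k
    _ ≤ mval μ ⊤ := mval_mono μ le_top

end Assembly

/-- Under CH, for any family `(φ_α)_{α<ω₂}` of Boolean homomorphisms from a countable
Boolean algebra `B` into `M_{ω₂}`, there are two distinct symmetric indices:
`φ_α a ⊓ φ_β b = ⊥ ↔ φ_β a ⊓ φ_α b = ⊥` for all `a b ∈ B`. -/
theorem exists_symmetric_pair (hCH : Cardinal.continuum = Cardinal.aleph 1)
    {B : Type} [BooleanAlgebra B] [Countable B]
    (φ : Omega2 → BoundedLatticeHom B (MAlg (Cube Omega2) (lam Omega2))) :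
    ∃ α β : Omega2, α ≠ β ∧
      ∀ a b : B, (φ α a ⊓ φ β b = ⊥ ↔ φ β a ⊓ φ α b = ⊥) := by
  classical
  by_contra hcon
  push_neg at hcon
  -- normalized witnesses
  set P : Omega2 → Omega2 → B × B × ℕ → Prop := fun α β t =>
    φ α t.1 ⊓ φ β t.2.1 = ⊥ ∧ 1/((t.2.2 : ℝ)+1) ≤ mval (lam Omega2) (φ β t.1 ⊓ φ α t.2.1) with hP
  have hwit : ∀ α β : Omega2, α ≠ β → ∃ t, P α β t := by
    intro α β hne
    obtain ⟨a, b, hnot⟩ := hcon α β hne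
    rcases hnot with ⟨h1, h2⟩ | ⟨h1, h2⟩
    · obtain ⟨n, hn⟩ := exists_nat_one_div_lt (mval_pos (lam Omega2) h2)
      exact ⟨(a, b, n), h1, le_of_lt hn⟩
    · have h3 : φ α b ⊓ φ β a = ⊥ := by rw [inf_comm]; exact h2
      have h4 : φ β b ⊓ φ α a ≠ ⊥ := by rw [inf_comm]; exact h1
      obtain ⟨n, hn⟩ := exists_nat_one_div_lt (mval_pos (lam Omega2) h4)
      exact ⟨(b, a, n), h3, le_of_lt hn⟩
  let col : Omega2 → Omega2 → B × B × ℕ := fun α β =>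
    if h : ∃ t, P α β t then h.choose else (⊥, ⊥, 0)
  have hcol : ∀ α β, α ≠ β → P α β (col α β) := by
    intro α β hne
    have h := hwit α β hne
    simp only [col, dif_pos h]
    exact h.choose_spec
  obtain ⟨enc, henc⟩ := exists_injective_nat (B × B × ℕ)
  have hX : Cardinal.continuum < Cardinal.mk Omega2 := by
    have h1 : Cardinal.mk Omega2 = Cardinal.aleph 2 := by
      rw [show Omega2 = (Cardinal.aleph 2).ord.ToType from rfl, Cardinal.mk_toType,
        Cardinal.card_ord]
    have hCH0 : Cardinal.continuum.{0} = Cardinal.aleph.{0} 1 := by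
      apply Cardinal.lift_injective
      rw [Cardinal.lift_continuum, Cardinal.lift_aleph]
      simp only [Ordinal.lift_one]
      exact hCH
    rw [h1, hCH0]
    exact Cardinal.aleph_lt_aleph.mpr one_lt_two
  obtain ⟨f, hfne, r, hfhom⟩ := erdos_rado_countable hX (fun α β => enc (col α β))
  have hsame : ∀ i j : ℕ, i < j → col (f i) (f j) = col (f 0) (f 1) := by
    intro i j hij
    apply henc
    rw [hfhom i j hij, ← hfhom 0 1 (by norm_num)]
  set t₀ := col (f 0) (f 1) with ht₀
  have hPij : ∀ i j : ℕ, i < j → P (f i) (f j) t₀ := by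
    intro i j hij
    rw [← hsame i j hij]
    exact hcol (f i) (f j) (hfne i j hij)
  set a := t₀.1
  set b := t₀.2.1
  set n := t₀.2.2
  set δ : ℝ := 1/((n : ℝ)+1) with hδ'
  have hδ : 0 < δ := by positivity
  let u : ℕ → MAlg (Cube Omega2) (lam Omega2) := fun i => φ (f (2*i+1)) a ⊓ φ (f (2*i)) b
  have hm : ∀ i, δ ≤ mval (lam Omega2) (u i) := by
    intro i
    exact (hPij (2*i) (2*i+1) (by omega)).2
  have hd : ∀ i j, i < j → u i ⊓ u j = ⊥ := by
    intro i j hij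
    have h1 : u i ⊓ u j ≤ φ (f (2*i+1)) a ⊓ φ (f (2*j)) b :=
      inf_le_inf inf_le_left inf_le_right
    rw [(hPij (2*i+1) (2*j) (by omega)).1] at h1
    exact le_bot_iff.mp h1
  obtain ⟨k, hk⟩ := exists_nat_gt (mval (lam Omega2) (⊤ : MAlg (Cube Omega2) (lam Omega2)) / δ)
  have hb := mval_disjoint_bound (lam Omega2) u δ hm hd k
  rw [div_lt_iff₀ hδ] at hk
  linarith
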